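/- arXiv:2101.09547 — 2 statements merged into one kernel-verified Lean document; each statement's English description precedes it below -/
import Mathlib

section
/- Let α > 2, ℓ ∈ [0,1], r > 0. Let W ≥ 0 with E[W^{2/α}] < ∞, Θ a random angle in [0,π/2] independent of W, and L a {1,ℓ}-valued random variable with P[L = 1 | Θ] = ρ(Θ) for a measurable function ρ: [0,π/2] → [0,1], with L conditionally independent of W given Θ. Then 2∫₀^∞ P[ W L (x sec Θ)^{-α} ≥ r ] x dx = E[cos²(Θ)(ρ(Θ)(1 - ℓ^{2/α}) + ℓ^{2/α})] · E[W^{2/α}] · r^{-2/α}. -/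
open MeasureTheory ProbabilityTheory Real Set

/-- `2∫₀^∞ P[W L (x sec Θ)^{-α} ≥ r] x dx
= E[cos²Θ (ρ(Θ)(1 - ℓ^{2/α}) + ℓ^{2/α})] · E[W^{2/α}] · r^{-2/α}`. -/
theorem weighted_tail_integral {Ω : Type*} [MeasurableSpace Ω]
    (μ : Measure Ω) [IsProbabilityMeasure μ]
    (α ℓ r : ℝ) (hα : 2 < α) (hℓ : ℓ ∈ Set.Icc (0 : ℝ) 1) (hr : 0 < r)
    (W L Θ : Ω → ℝ)
    (hWmeas : Measurable W) (hLmeas : Measurable L) (hΘmeas : Measurable Θ)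
    (hWnonneg : ∀ ω, 0 ≤ W ω)
    (hWmom : Integrable (fun ω => W ω ^ (2 / α)) μ)
    (hΘrange : ∀ ω, Θ ω ∈ Set.Icc 0 (π / 2))
    (hLval : ∀ ω, L ω = 1 ∨ L ω = ℓ)
    (ρ : ℝ → ℝ) (hρmeas : Measurable ρ) (hρrange : ∀ θ, ρ θ ∈ Set.Icc (0 : ℝ) 1)
    (hcond : μ[Set.indicator {ω | L ω = 1} (fun _ => (1 : ℝ)) |
        MeasurableSpace.comap Θ Real.measurableSpace] =ᵐ[μ] fun ω => ρ (Θ ω))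
    (hindep : IndepFun W (fun ω => (L ω, Θ ω)) μ) :
    2 * ∫ x in Set.Ioi (0 : ℝ),
        (μ {ω | r ≤ W ω * L ω * (x / Real.cos (Θ ω)) ^ (-α)}).toReal * x
      = (∫ ω, Real.cos (Θ ω) ^ 2 * (ρ (Θ ω) * (1 - ℓ ^ (2 / α)) + ℓ ^ (2 / α)) ∂μ)
          * (∫ ω, W ω ^ (2 / α) ∂μ) * r ^ (-(2 / α)) := by
  have hα0 : (0:ℝ) < α := by linarith
  have hℓ0 : (0:ℝ) ≤ ℓ := hℓ.1
  have hℓ1 : ℓ ≤ 1 := hℓ.2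
  have hβ0 : (0:ℝ) < 2 / α := by positivity
  have hLnonneg : ∀ ω, 0 ≤ L ω := fun ω => by
    rcases hLval ω with h | h <;> rw [h]
    · norm_num
    · exact hℓ0
  have hLle1 : ∀ ω, L ω ≤ 1 := fun ω => by
    rcases hLval ω with h | h <;> rw [h]
    exact hℓ1
  have hcosnn : ∀ ω, 0 ≤ Real.cos (Θ ω) := fun ω =>
    Real.cos_nonneg_of_mem_Icc ⟨le_trans (by linarith [Real.pi_pos]) (hΘrange ω).1, (hΘrange ω).2⟩
  have hcosle1 : ∀ ω, Real.cos (Θ ω) ≤ 1 := fun ω => Real.cos_le_one _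
  have hWLr_nn : ∀ ω, 0 ≤ W ω * L ω / r := fun ω => by
    have := hWnonneg ω; have := hLnonneg ω; positivity
  -- the "radius" function
  set T : Ω → ℝ := fun ω => Real.cos (Θ ω) * (W ω * L ω / r) ^ α⁻¹ with hT
  have hTnn : ∀ ω, 0 ≤ T ω := fun ω =>
    mul_nonneg (hcosnn ω) (Real.rpow_nonneg (hWLr_nn ω) _)
  have hTmeas : Measurable T := by
    rw [hT]; fun_prop
  -- Step A: rewrite the tail set
  have hset : ∀ x : ℝ, 0 < x →
      {ω | r ≤ W ω * L ω * (x / Real.cos (Θ ω)) ^ (-α)} = {ω | x ≤ T ω} := by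
    intro x hx
    ext ω
    simp only [Set.mem_setOf_eq, hT]
    rcases eq_or_lt_of_le (hcosnn ω) with hc | hc
    · rw [← hc]
      simp only [div_zero, Real.zero_rpow (by linarith : -α ≠ 0), mul_zero, zero_mul]
      constructor
      · intro h; linarith
      · intro h; linarith
    · have hxc : 0 < x / Real.cos (Θ ω) := div_pos hx hc
      have hy : 0 < (x / Real.cos (Θ ω)) ^ α := Real.rpow_pos_of_pos hxc α
      rw [Real.rpow_neg hxc.le, ← div_eq_mul_inv, le_div_iff₀ hy,
        mul_comm (Real.cos (Θ ω)), ← div_le_iff₀ hc,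
        Real.le_rpow_inv_iff_of_pos hxc.le (hWLr_nn ω) hα0, le_div_iff₀ hr,
        mul_comm r]
  -- pointwise formula for T ^ 2
  have hTsq : ∀ ω, T ω ^ (2:ℝ)
      = W ω ^ (2/α) * (Real.cos (Θ ω) ^ 2 * L ω ^ (2/α)) * r ^ (-(2/α)) := by
    intro ω
    have hWnn := hWnonneg ω
    have hLnn := hLnonneg ω
    have h2 : ((W ω * L ω / r) ^ α⁻¹) ^ (2:ℝ) = (W ω * L ω / r) ^ (2/α) := by
      rw [← Real.rpow_mul (hWLr_nn ω)]
      congr 1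
      rw [div_eq_mul_inv, mul_comm]
    have h3 : Real.cos (Θ ω) ^ (2:ℝ) = Real.cos (Θ ω) ^ (2:ℕ) := by
      rw [← Real.rpow_natCast (Real.cos (Θ ω)) 2]
      norm_num
    rw [hT]
    simp only
    rw [Real.mul_rpow (hcosnn ω) (Real.rpow_nonneg (hWLr_nn ω) _), h2, h3,
      Real.div_rpow (by positivity) hr.le, Real.mul_rpow hWnn hLnn,
      Real.rpow_neg hr.le, div_eq_mul_inv]
    ring
  -- integrability of T ^ 2
  have hTsq_meas : Measurable fun ω => T ω ^ (2:ℝ) := by fun_prop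
  have hTsq_int : Integrable (fun ω => T ω ^ (2:ℝ)) μ := by
    refine (hWmom.const_mul (r ^ (-(2/α)))).mono' hTsq_meas.aestronglyMeasurable ?_
    refine Filter.Eventually.of_forall fun ω => ?_
    rw [Real.norm_eq_abs, abs_of_nonneg (Real.rpow_nonneg (hTnn ω) _), hTsq ω]
    have h1 : Real.cos (Θ ω) ^ 2 * L ω ^ (2/α) ≤ 1 := by
      have h2 : Real.cos (Θ ω) ^ 2 ≤ 1 := by
        have := hcosnn ω; have := hcosle1 ω; nlinarith
      have h3 : L ω ^ (2/α) ≤ 1 := Real.rpow_le_one (hLnonneg ω) (hLle1 ω) hβ0.le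
      have h4 : (0:ℝ) ≤ L ω ^ (2/α) := Real.rpow_nonneg (hLnonneg ω) _
      nlinarith
    have h5 : (0:ℝ) ≤ W ω ^ (2/α) := Real.rpow_nonneg (hWnonneg ω) _
    have h6 : (0:ℝ) ≤ r ^ (-(2/α)) := Real.rpow_nonneg hr.le _
    have h7 : (0:ℝ) ≤ Real.cos (Θ ω) ^ 2 * L ω ^ (2/α) :=
      mul_nonneg (by positivity) (Real.rpow_nonneg (hLnonneg ω) _)
    calc W ω ^ (2/α) * (Real.cos (Θ ω) ^ 2 * L ω ^ (2/α)) * r ^ (-(2/α))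
        ≤ W ω ^ (2/α) * 1 * r ^ (-(2/α)) := by
          apply mul_le_mul_of_nonneg_right _ h6
          exact mul_le_mul_of_nonneg_left h1 h5
      _ = r ^ (-(2/α)) * W ω ^ (2/α) := by ring
  -- Step B : layer cake
  have hmeasμ : Measurable fun t : ℝ => μ {a | t ≤ T a} := by
    apply Antitone.measurable
    intro s t hst
    exact measure_mono fun a ha => le_trans hst ha
  have hFconv : ∫ x in Ioi (0:ℝ), (μ {ω | x ≤ T ω}).toReal * x
      = (∫⁻ x in Ioi (0:ℝ), μ {ω | x ≤ T ω} * ENNReal.ofReal x).toReal := by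
    rw [integral_eq_lintegral_of_nonneg_ae]
    · congr 1
      refine setLIntegral_congr_fun measurableSet_Ioi
        (fun x hx => ?_)
      rw [ENNReal.ofReal_mul ENNReal.toReal_nonneg,
        ENNReal.ofReal_toReal (measure_ne_top μ _)]
    · filter_upwards [self_mem_ae_restrict (measurableSet_Ioi : MeasurableSet (Ioi (0:ℝ)))]
        with x hx
      exact mul_nonneg ENNReal.toReal_nonneg (le_of_lt hx)
    · exact ((hmeasμ.ennreal_toReal).mul measurable_id).aestronglyMeasurable
  have key := lintegral_rpow_eq_lintegral_meas_le_mul μ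
    (Filter.Eventually.of_forall hTnn) hTmeas.aemeasurable (p := 2) two_pos
  have key' : ∫⁻ ω, ENNReal.ofReal (T ω ^ (2:ℝ)) ∂μ
      = ENNReal.ofReal 2 * ∫⁻ t in Ioi (0:ℝ), μ {a | t ≤ T a} * ENNReal.ofReal t := by
    rw [key]
    congr 1
    refine setLIntegral_congr_fun measurableSet_Ioi
      (fun t ht => ?_)
    norm_num
  have heq2 : (∫ ω, T ω ^ (2:ℝ) ∂μ)
      = 2 * ∫ x in Ioi (0:ℝ), (μ {ω | x ≤ T ω}).toReal * x := by
    have hnn : 0 ≤ ∫ ω, T ω ^ (2:ℝ) ∂μ :=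
      integral_nonneg fun ω => Real.rpow_nonneg (hTnn ω) _
    have h8 : ENNReal.ofReal (∫ ω, T ω ^ (2:ℝ) ∂μ)
        = ∫⁻ ω, ENNReal.ofReal (T ω ^ (2:ℝ)) ∂μ :=
      ofReal_integral_eq_lintegral_ofReal hTsq_int
        (Filter.Eventually.of_forall fun ω => Real.rpow_nonneg (hTnn ω) _)
    calc ∫ ω, T ω ^ (2:ℝ) ∂μ
        = (ENNReal.ofReal (∫ ω, T ω ^ (2:ℝ) ∂μ)).toReal := (ENNReal.toReal_ofReal hnn).symm
      _ = ((ENNReal.ofReal 2) * ∫⁻ t in Ioi (0:ℝ), μ {a | t ≤ T a} * ENNReal.ofReal t).toReal := by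
          rw [h8, key']
      _ = 2 * (∫⁻ t in Ioi (0:ℝ), μ {a | t ≤ T a} * ENNReal.ofReal t).toReal := by
          rw [ENNReal.toReal_mul, ENNReal.toReal_ofReal (by norm_num : (0:ℝ) ≤ 2)]
      _ = 2 * ∫ x in Ioi (0:ℝ), (μ {ω | x ≤ T ω}).toReal * x := by rw [hFconv]
  -- Step D : independence
  have hg_meas : Measurable fun ω => Real.cos (Θ ω) ^ 2 * L ω ^ (2/α) := by fun_prop
  have hindep2 : IndepFun (fun ω => W ω ^ (2/α))
      (fun ω => Real.cos (Θ ω) ^ 2 * L ω ^ (2/α)) μ := by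
    have h := hindep.comp (φ := fun w : ℝ => w ^ (2/α))
      (ψ := fun p : ℝ × ℝ => Real.cos p.2 ^ 2 * p.1 ^ (2/α))
      (by fun_prop)
      (by fun_prop)
    exact h
  have hDint : ∫ ω, W ω ^ (2/α) * (Real.cos (Θ ω) ^ 2 * L ω ^ (2/α)) ∂μ
      = (∫ ω, W ω ^ (2/α) ∂μ) * ∫ ω, Real.cos (Θ ω) ^ 2 * L ω ^ (2/α) ∂μ :=
    hindep2.integral_fun_mul_eq_mul_integral (hWmom.aestronglyMeasurable) hg_meas.aestronglyMeasurable
  -- Step E : conditional expectation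
  have hm : MeasurableSpace.comap Θ Real.measurableSpace ≤ ‹MeasurableSpace Ω› :=
    hΘmeas.comap_le
  set I : Ω → ℝ := Set.indicator {ω | L ω = 1} (fun _ => (1 : ℝ)) with hI
  have hImeas : Measurable I := by
    apply Measurable.indicator measurable_const
    exact hLmeas (measurableSet_singleton 1)
  have hInn : ∀ ω, 0 ≤ I ω := fun ω => Set.indicator_nonneg (fun _ _ => zero_le_one) ω
  have hIle1 : ∀ ω, I ω ≤ 1 := fun ω => Set.indicator_le_self' (fun _ _ => zero_le_one) ω
  have hbdd_int : ∀ (f : Ω → ℝ), Measurable f → (∀ ω, |f ω| ≤ 1) → Integrable f μ := by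
    intro f hfm hfb
    refine (integrable_const (1:ℝ)).mono' hfm.aestronglyMeasurable ?_
    exact Filter.Eventually.of_forall fun ω => by simpa using hfb ω
  have hcos2_abs : ∀ ω, |Real.cos (Θ ω) ^ 2| ≤ 1 := fun ω => by
    rw [abs_of_nonneg (by positivity)]
    have := hcosnn ω; have := hcosle1 ω; nlinarith
  have hcos2_sm : StronglyMeasurable[MeasurableSpace.comap Θ Real.measurableSpace] fun ω => Real.cos (Θ ω) ^ 2 := by
    have hΘm : Measurable[MeasurableSpace.comap Θ Real.measurableSpace] Θ := Measurable.of_comap_le le_rfl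
    exact ((Real.measurable_cos.comp hΘm).pow_const 2).stronglyMeasurable
  have hI_int : Integrable I μ := hbdd_int I hImeas fun ω => by
    rw [abs_of_nonneg (hInn ω)]; exact hIle1 ω
  have hfI_int : Integrable (fun ω => Real.cos (Θ ω) ^ 2 * I ω) μ := by
    refine hbdd_int _ (((Real.measurable_cos.comp hΘmeas).pow_const 2).mul hImeas) fun ω => ?_
    rw [abs_mul]
    calc |Real.cos (Θ ω) ^ 2| * |I ω| ≤ 1 * 1 := by
          apply mul_le_mul (hcos2_abs ω) _ (abs_nonneg _) zero_le_one
          rw [abs_of_nonneg (hInn ω)]; exact hIle1 ω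
      _ = 1 := by norm_num
  have hpull : μ[(fun ω => Real.cos (Θ ω) ^ 2) * I | MeasurableSpace.comap Θ Real.measurableSpace]
      =ᵐ[μ] (fun ω => Real.cos (Θ ω) ^ 2) * μ[I | MeasurableSpace.comap Θ Real.measurableSpace] :=
    condExp_mul_of_stronglyMeasurable_left hcos2_sm hfI_int hI_int
  have hEI : ∫ ω, Real.cos (Θ ω) ^ 2 * I ω ∂μ = ∫ ω, Real.cos (Θ ω) ^ 2 * ρ (Θ ω) ∂μ := by
    have h1 : ∫ ω, Real.cos (Θ ω) ^ 2 * I ω ∂μ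
        = ∫ ω, (μ[(fun ω => Real.cos (Θ ω) ^ 2) * I | MeasurableSpace.comap Θ Real.measurableSpace]) ω ∂μ :=
      (integral_condExp hm).symm
    rw [h1]
    apply integral_congr_ae
    filter_upwards [hpull, hcond] with ω h1 h2
    rw [h1]
    simp only [Pi.mul_apply]
    rw [h2]
  -- pointwise identity for L ^ (2/α)
  have hLpt : ∀ ω, L ω ^ (2/α) = ℓ ^ (2/α) + (1 - ℓ ^ (2/α)) * I ω := by
    intro ω
    by_cases h : L ω = 1
    · have : I ω = 1 := Set.indicator_of_mem (by exact h) _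
      rw [h, this, Real.one_rpow]; ring
    · have hL : L ω = ℓ := (hLval ω).resolve_left h
      have : I ω = 0 := Set.indicator_of_notMem (by exact h) _
      rw [hL, this]; ring
  -- Step E assembled
  have hcos2_int : Integrable (fun ω => Real.cos (Θ ω) ^ 2) μ :=
    hbdd_int _ ((Real.measurable_cos.comp hΘmeas).pow_const 2) hcos2_abs
  have hE : ∫ ω, Real.cos (Θ ω) ^ 2 * L ω ^ (2/α) ∂μ
      = ∫ ω, Real.cos (Θ ω) ^ 2 * (ρ (Θ ω) * (1 - ℓ ^ (2/α)) + ℓ ^ (2/α)) ∂μ := by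
    have hlhs : (fun ω => Real.cos (Θ ω) ^ 2 * L ω ^ (2/α))
        = fun ω => Real.cos (Θ ω) ^ 2 * ℓ ^ (2/α)
            + (1 - ℓ ^ (2/α)) * (Real.cos (Θ ω) ^ 2 * I ω) := by
      funext ω; rw [hLpt ω]; ring
    have hrhs : (fun ω => Real.cos (Θ ω) ^ 2 * (ρ (Θ ω) * (1 - ℓ ^ (2/α)) + ℓ ^ (2/α)))
        = fun ω => Real.cos (Θ ω) ^ 2 * ℓ ^ (2/α)
            + (1 - ℓ ^ (2/α)) * (Real.cos (Θ ω) ^ 2 * ρ (Θ ω)) := by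
      funext ω; ring
    rw [hlhs, hrhs]
    have hcosρ_int : Integrable (fun ω => Real.cos (Θ ω) ^ 2 * ρ (Θ ω)) μ := by
      refine hbdd_int _ (((Real.measurable_cos.comp hΘmeas).pow_const 2).mul
        (hρmeas.comp hΘmeas)) fun ω => ?_
      rw [abs_mul]
      calc |Real.cos (Θ ω) ^ 2| * |ρ (Θ ω)| ≤ 1 * 1 := by
            apply mul_le_mul (hcos2_abs ω) _ (abs_nonneg _) zero_le_one
            rw [abs_of_nonneg (hρrange (Θ ω)).1]; exact (hρrange (Θ ω)).2
        _ = 1 := by norm_num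
    rw [integral_add (hcos2_int.mul_const _) (hfI_int.const_mul _),
      integral_add (hcos2_int.mul_const _) (hcosρ_int.const_mul _),
      integral_const_mul, integral_const_mul, hEI]
  -- assemble everything
  have hLHS : ∫ x in Ioi (0:ℝ), (μ {ω | r ≤ W ω * L ω * (x / Real.cos (Θ ω)) ^ (-α)}).toReal * x
      = ∫ x in Ioi (0:ℝ), (μ {ω | x ≤ T ω}).toReal * x := by
    apply setIntegral_congr_fun measurableSet_Ioi
    intro x hx
    simp only
    rw [hset x hx]
  rw [hLHS, ← heq2]
  have hTeq : (fun ω => T ω ^ (2:ℝ))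
      = fun ω => (W ω ^ (2/α) * (Real.cos (Θ ω) ^ 2 * L ω ^ (2/α))) * r ^ (-(2/α)) := by
    funext ω; rw [hTsq ω]
  rw [hTeq, integral_mul_const, hDint, hE]
  ring
end

section
/- For 0 < v < 1 and u > 0, the function I_G(u,v) := u^v ( πv / sin(πv) − ∫₀^{u^{−v}} dr/(1 + r^{1/v}) ) is nonnegative and strictly increasing in u. -/
open MeasureTheory Real Set

/-- The function `I_G(u,v) = u^v (πv/sin(πv) − ∫₀^{u^{−v}} dr/(1 + r^{1/v}))`. -/
noncomputable def IG (u v : ℝ) : ℝ :=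
  u ^ v * (π * v / Real.sin (π * v)
    - ∫ r in Set.Ioc (0 : ℝ) (u ^ (-v)), 1 / (1 + r ^ (1 / v)))


lemma beta_real (v : ℝ) (hv : v ∈ Set.Ioo (0:ℝ) 1) :
    ∫ t in Set.Ioo (0:ℝ) 1, t ^ (v-1) * (1-t) ^ (-v) = π / Real.sin (π * v) := by
  obtain ⟨hv0, hv1⟩ := hv
  have h1 : Complex.Gamma v * Complex.Gamma (1 - v)
      = Complex.Gamma (v + (1 - v)) * Complex.betaIntegral v (1 - v) := by
    apply Complex.Gamma_mul_Gamma_eq_betaIntegral <;> simp [hv0, hv1]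
  have h2 : (v : ℂ) + (1 - v) = 1 := by ring
  rw [h2, Complex.Gamma_one, one_mul] at h1
  have h3 : Complex.betaIntegral v (1 - v)
      = ((∫ t in (0:ℝ)..1, t ^ (v-1) * (1-t) ^ (-v) : ℝ) : ℂ) := by
    rw [Complex.betaIntegral, ← intervalIntegral.integral_ofReal]
    apply intervalIntegral.integral_congr_ae
    rw [uIoc_of_le (by norm_num : (0:ℝ) ≤ 1)]
    refine ae_of_all _ fun t ht => ?_
    have ht0 : (0:ℝ) ≤ t := ht.1.le
    have ht1 : (0:ℝ) ≤ 1 - t := by linarith [ht.2]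
    push_cast [Complex.ofReal_cpow ht0, Complex.ofReal_cpow ht1]
    norm_num
  rw [h3, ← Complex.ofReal_one, ← Complex.ofReal_sub, Complex.Gamma_ofReal,
    Complex.Gamma_ofReal, ← Complex.ofReal_mul] at h1
  have h4 : Real.Gamma v * Real.Gamma (1 - v) = ∫ t in (0:ℝ)..1, t ^ (v-1) * (1-t) ^ (-v) :=
    Complex.ofReal_injective h1
  have h5 : Real.Gamma v * Real.Gamma (1 - v) = π / Real.sin (π * v) :=
    Real.Gamma_mul_Gamma_one_sub v
  rw [← h5, h4, intervalIntegral.integral_of_le (by norm_num : (0:ℝ) ≤ 1),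
    ← MeasureTheory.integral_Ioc_eq_integral_Ioo]

lemma subst_moebius (v : ℝ) (hv : v ∈ Set.Ioo (0:ℝ) 1) :
    ∫ x in Set.Ioi (0:ℝ), x ^ (v-1) / (1+x)
      = ∫ t in Set.Ioo (0:ℝ) 1, t ^ (v-1) * (1-t) ^ (-v) := by
  obtain ⟨hv0, hv1⟩ := hv
  set f : ℝ → ℝ := fun x => x / (1+x) with hf
  have himg : f '' Set.Ioi (0:ℝ) = Set.Ioo (0:ℝ) 1 := by
    ext t
    constructor
    · rintro ⟨x, hx, rfl⟩
      have hx0 : (0:ℝ) < x := hx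
      have h1x : (0:ℝ) < 1 + x := by linarith
      constructor
      · positivity
      · rw [div_lt_one h1x]; linarith
    · rintro ⟨ht0, ht1⟩
      have h1t : (0:ℝ) < 1 - t := by linarith
      refine ⟨t / (1-t), mem_Ioi.mpr (div_pos ht0 h1t), ?_⟩
      simp only [hf]
      field_simp
      ring
  have hderiv : ∀ x ∈ Set.Ioi (0:ℝ),
      HasDerivWithinAt f (1 / (1+x)^2) (Set.Ioi (0:ℝ)) x := by
    intro x hx
    have h1x : (1:ℝ) + x ≠ 0 := by have : (0:ℝ) < x := hx; positivity
    have : HasDerivAt f ((1 * (1+x) - x * (0 + 1)) / (1+x)^2) x :=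
      (hasDerivAt_id x).div ((hasDerivAt_const x 1).add (hasDerivAt_id x)) h1x
    rw [show (1:ℝ) / (1+x)^2 = (1 * (1+x) - x * (0 + 1)) / (1+x)^2 by ring]
    exact this.hasDerivWithinAt
  have hinj : Set.InjOn f (Set.Ioi (0:ℝ)) := by
    intro a ha b hb hab
    have ha' : (0:ℝ) < 1 + a := by have : (0:ℝ) < a := ha; linarith
    have hb' : (0:ℝ) < 1 + b := by have : (0:ℝ) < b := hb; linarith
    simp only [hf] at hab
    rw [div_eq_div_iff ha'.ne' hb'.ne'] at hab
    linarith [hab]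
  have := integral_image_eq_integral_abs_deriv_smul measurableSet_Ioi hderiv hinj
    (fun t => t ^ (v-1) * (1-t) ^ (-v))
  rw [himg] at this
  rw [this]
  refine setIntegral_congr_fun measurableSet_Ioi fun x hx => ?_
  have hx0 : (0:ℝ) < x := hx
  have h1x : (0:ℝ) < 1 + x := by linarith
  have hfx : 1 - f x = 1 / (1+x) := by
    simp only [hf]; rw [eq_div_iff h1x.ne', sub_mul, div_mul_cancel₀ _ h1x.ne']; ring
  have h2 : f x ^ (v-1) = x ^ (v-1) * ((1+x) ^ (v-1))⁻¹ := by
    rw [hf]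
    simp only
    rw [Real.div_rpow hx0.le h1x.le, div_eq_mul_inv]
  have h3 : (1 - f x) ^ (-v) = (1+x) ^ v := by
    rw [hfx, one_div, ← Real.rpow_neg_one (1+x), ← Real.rpow_mul h1x.le]
    norm_num
  rw [h2, h3, smul_eq_mul, abs_of_pos (by positivity : (0:ℝ) < 1/(1+x)^2)]
  have h4 : ((1+x):ℝ) ^ (v-1) ≠ 0 := (Real.rpow_pos_of_pos h1x _).ne'
  have h5 : ((1+x):ℝ) ^ v = (1+x) ^ (v-1) * (1+x) := by
    rw [← Real.rpow_add_one h1x.ne' (v-1)]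
    ring_nf
  rw [h5]
  field_simp

lemma key_integral0 (v : ℝ) (hv : v ∈ Set.Ioo (0:ℝ) 1)
    (hb : ∫ x in Set.Ioi (0:ℝ), x ^ (v-1) / (1+x) = π / Real.sin (π * v)) :
    ∫ r in Set.Ioi (0:ℝ), 1 / (1 + r ^ (1/v)) = π * v / Real.sin (π * v) := by
  obtain ⟨hv0, hv1⟩ := hv
  have := MeasureTheory.integral_comp_rpow_Ioi (fun y => 1 / (1 + y ^ (1/v))) hv0.ne'
  rw [← this]
  have : ∀ x ∈ Set.Ioi (0:ℝ),
      (|v| * x ^ (v-1)) • (1 / (1 + (x ^ v) ^ (1/v))) = v * (x ^ (v-1) / (1+x)) := by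
    intro x hx
    have hx0 : (0:ℝ) < x := hx
    rw [← Real.rpow_mul hx0.le, mul_one_div_cancel hv0.ne', Real.rpow_one,
      abs_of_pos hv0, smul_eq_mul]
    ring
  rw [setIntegral_congr_fun measurableSet_Ioi this, integral_const_mul, hb]
  field_simp

lemma key_integral (v : ℝ) (hv : v ∈ Set.Ioo (0:ℝ) 1) :
    ∫ r in Set.Ioi (0:ℝ), 1 / (1 + r ^ (1/v)) = π * v / Real.sin (π * v) :=
  key_integral0 v hv (by rw [subst_moebius v hv, beta_real v hv])

lemma cont_g (v u : ℝ) (hv0 : 0 < v) (hu : 0 < u) :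
    ContinuousOn (fun s : ℝ => 1 / (1 + s ^ (1/v) / u)) (Set.Ici 0) := by
  have hc : ContinuousOn (fun s : ℝ => 1 + s ^ (1/v) / u) (Set.Ici 0) :=
    continuousOn_const.add ((ContinuousOn.rpow_const continuousOn_id
      (fun x _ => Or.inr (by positivity))).div_const u)
  refine continuousOn_const.div hc fun s hs => ?_
  have h1 : (0:ℝ) ≤ s ^ (1/v) / u := div_nonneg (Real.rpow_nonneg hs _) hu.le
  exact ne_of_gt (by linarith)

lemma integrable_g (v u : ℝ) (hv : v ∈ Set.Ioo (0:ℝ) 1) (hu : 0 < u) :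
    IntegrableOn (fun s : ℝ => 1 / (1 + s ^ (1/v) / u)) (Set.Ioi 0) := by
  obtain ⟨hv0, hv1⟩ := hv
  have hmeas : AEStronglyMeasurable (fun s : ℝ => 1 / (1 + s ^ (1/v) / u))
      (volume.restrict (Set.Ioi 0)) :=
    ((cont_g v u hv0 hu).mono Ioi_subset_Ici_self).aestronglyMeasurable measurableSet_Ioi
  have hsplit : Set.Ioc (0:ℝ) 1 ∪ Set.Ioi 1 = Set.Ioi 0 := Set.Ioc_union_Ioi_eq_Ioi zero_le_one
  rw [← hsplit]
  apply MeasureTheory.IntegrableOn.union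
  · exact (((cont_g v u hv0 hu).mono Set.Icc_subset_Ici_self).integrableOn_compact
      isCompact_Icc).mono_set Set.Ioc_subset_Icc_self
  · have hint : IntegrableOn (fun s : ℝ => u * s ^ (-(1/v))) (Set.Ioi 1) :=
      (integrableOn_Ioi_rpow_of_lt (by rw [neg_lt_neg_iff]; exact one_lt_one_div hv0 hv1)
        zero_lt_one).const_mul u
    apply hint.mono' (((cont_g v u hv0 hu).mono
      ((Set.Ioi_subset_Ioi zero_le_one).trans Set.Ioi_subset_Ici_self)).aestronglyMeasurable
      measurableSet_Ioi)
    filter_upwards [ae_restrict_mem measurableSet_Ioi] with s hs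
    have hs1 : (1:ℝ) < s := hs
    have hs0 : (0:ℝ) < s := lt_trans zero_lt_one hs1
    have hp : (0:ℝ) < s ^ (1/v) := Real.rpow_pos_of_pos hs0 _
    have hdu : (0:ℝ) < s ^ (1/v) / u := div_pos hp hu
    have hd : (0:ℝ) < 1 + s ^ (1/v) / u := by linarith
    rw [Real.norm_eq_abs, abs_of_nonneg (div_nonneg zero_le_one hd.le), Real.rpow_neg hs0.le]
    calc 1 / (1 + s ^ (1/v) / u) ≤ 1 / (s ^ (1/v) / u) :=
          one_div_le_one_div_of_le hdu (by linarith)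
      _ = u * (s ^ (1/v))⁻¹ := by field_simp

lemma integrable_f (v : ℝ) (hv : v ∈ Set.Ioo (0:ℝ) 1) :
    IntegrableOn (fun r : ℝ => 1 / (1 + r ^ (1/v))) (Set.Ioi 0) := by
  have := integrable_g v 1 hv zero_lt_one
  simpa using this

lemma IG_eq (v u : ℝ) (hv : v ∈ Set.Ioo (0:ℝ) 1) (hu : 0 < u) :
    IG u v = ∫ s in Set.Ioi (1:ℝ), 1 / (1 + s ^ (1/v) / u) := by
  obtain ⟨hv0, hv1⟩ := hv
  set a : ℝ := u ^ (-v) with ha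
  have ha0 : 0 < a := Real.rpow_pos_of_pos hu _
  have hsplit : Set.Ioc (0:ℝ) a ∪ Set.Ioi a = Set.Ioi 0 := Set.Ioc_union_Ioi_eq_Ioi ha0.le
  have hdisj : Disjoint (Set.Ioc (0:ℝ) a) (Set.Ioi a) := Set.Ioc_disjoint_Ioi le_rfl
  have hf := integrable_f v ⟨hv0, hv1⟩
  have hsum : (∫ r in Set.Ioi (0:ℝ), 1 / (1 + r ^ (1/v)))
      = (∫ r in Set.Ioc (0:ℝ) a, 1 / (1 + r ^ (1/v)))
        + ∫ r in Set.Ioi a, 1 / (1 + r ^ (1/v)) := by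
    rw [← hsplit] at hf ⊢
    exact setIntegral_union hdisj measurableSet_Ioi (hf.mono_set Set.subset_union_left)
      (hf.mono_set Set.subset_union_right)
  have htail : π * v / Real.sin (π * v) - (∫ r in Set.Ioc (0:ℝ) a, 1 / (1 + r ^ (1/v)))
      = ∫ r in Set.Ioi a, 1 / (1 + r ^ (1/v)) := by
    rw [← key_integral v ⟨hv0, hv1⟩, hsum]; ring
  rw [IG, ← ha, htail]
  -- scaling
  have hscale := MeasureTheory.integral_comp_mul_left_Ioi
    (fun r : ℝ => 1 / (1 + r ^ (1/v))) 1 ha0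
  rw [mul_one, smul_eq_mul] at hscale
  have hcongr : ∀ x ∈ Set.Ioi (1:ℝ),
      1 / (1 + (a * x) ^ (1/v)) = 1 / (1 + x ^ (1/v) / u) := by
    intro x hx
    have hx0 : (0:ℝ) < x := lt_trans zero_lt_one hx
    have h1 : (a * x) ^ (1/v) = a ^ (1/v) * x ^ (1/v) :=
      Real.mul_rpow ha0.le hx0.le
    have h2 : a ^ (1/v) = u⁻¹ := by
      rw [ha, ← Real.rpow_mul hu.le]
      have : -v * (1/v) = -1 := by field_simp
      rw [this, Real.rpow_neg_one]
    rw [h1, h2, inv_mul_eq_div]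
  rw [← setIntegral_congr_fun measurableSet_Ioi hcongr, hscale]
  have hav : a⁻¹ = u ^ v := by
    rw [ha, Real.rpow_neg hu.le, inv_inv]
  rw [hav]

/-- For `0 < v < 1`, `I_G(·, v)` is nonnegative and strictly increasing on `(0,∞)`. -/
theorem IG_nonneg_strictMono (v : ℝ) (hv : v ∈ Set.Ioo (0 : ℝ) 1) :
    (∀ u > (0 : ℝ), 0 ≤ IG u v) ∧ StrictMonoOn (fun u => IG u v) (Set.Ioi 0) := by
  constructor
  · intro u hu
    rw [IG_eq v u hv hu]
    refine setIntegral_nonneg measurableSet_Ioi fun s hs => ?_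
    have hs0 : (0:ℝ) < s := lt_trans zero_lt_one hs
    have : (0:ℝ) < s ^ (1/v) / u := div_pos (Real.rpow_pos_of_pos hs0 _) hu
    positivity
  · intro u1 hu1 u2 hu2 h12
    have hu1' : (0:ℝ) < u1 := hu1
    have hu2' : (0:ℝ) < u2 := hu2
    simp only
    rw [IG_eq v u1 hv hu1', IG_eq v u2 hv hu2']
    have hi1 : IntegrableOn (fun s : ℝ => 1 / (1 + s ^ (1/v) / u1)) (Set.Ioi 1) :=
      (integrable_g v u1 hv hu1').mono_set (Set.Ioi_subset_Ioi zero_le_one)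
    have hi2 : IntegrableOn (fun s : ℝ => 1 / (1 + s ^ (1/v) / u2)) (Set.Ioi 1) :=
      (integrable_g v u2 hv hu2').mono_set (Set.Ioi_subset_Ioi zero_le_one)
    rw [← sub_pos, ← integral_sub hi2 hi1]
    have hptwise : ∀ s : ℝ, s ∈ Set.Ioi (1:ℝ) →
        0 < 1 / (1 + s ^ (1/v) / u2) - 1 / (1 + s ^ (1/v) / u1) := by
      intro s hs
      have hs0 : (0:ℝ) < s := lt_trans zero_lt_one hs
      have hp : (0:ℝ) < s ^ (1/v) := Real.rpow_pos_of_pos hs0 _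
      have hlt : s ^ (1/v) / u2 < s ^ (1/v) / u1 :=
        div_lt_div_of_pos_left hp hu1' h12
      have hd2 : (0:ℝ) < 1 + s ^ (1/v) / u2 := by positivity
      have hd1 : (0:ℝ) < 1 + s ^ (1/v) / u1 := by positivity
      have := one_div_lt_one_div_of_lt hd2 (by linarith : 1 + s ^ (1/v) / u2 < 1 + s ^ (1/v) / u1)
      linarith
    rw [setIntegral_pos_iff_support_of_nonneg_ae]
    · have hsub : Set.Ioi (1:ℝ) ⊆ Function.support
          (fun s => 1 / (1 + s ^ (1/v) / u2) - 1 / (1 + s ^ (1/v) / u1)) := by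
        intro s hs
        exact (hptwise s hs).ne'
      rw [Set.inter_eq_self_of_subset_right hsub, Real.volume_Ioi]
      simp
    · filter_upwards [ae_restrict_mem measurableSet_Ioi] with s hs
      exact (hptwise s hs).le
    · exact hi2.sub hi1
end
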